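/- The normalizer of the group Aff_I(X*) in Aut(X*) coincides with the group Aff(X*) of all affine automorphisms: an automorphism g of the rooted d-regular tree satisfies g⁻¹ Aff_I(X*) g = Aff_I(X*) if and only if g = π_{A,b} for some A ∈ U_∞ℤ_d and b ∈ ℤ_d^∞. -/

import Mathlib

/-- `A` is an infinite upper triangular matrix over `ℤ/dℤ` with units on the diagonal,
i.e. `A ∈ U_∞ℤ_d`. -/
def IsUT (d : ℕ) (A : ℕ → ℕ → ZMod d) : Prop :=
  (∀ i j, j < i → A i j = 0) ∧ (∀ i, IsUnit (A i i))

/-- The affine transformation `π_{A,b} : ℤ_d^∞ → ℤ_d^∞`, `x ↦ b + x·A`. -/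
def affMap (d : ℕ) (A : ℕ → ℕ → ZMod d) (b : ℕ → ZMod d)
    (x : ℕ → ZMod d) : ℕ → ZMod d :=
  fun j => b j + ∑ i ∈ Finset.range (j + 1), x i * A i j

/-- `g` preserves agreement of initial segments: if two sequences agree in their first
`n` entries, then so do their images, for every `n`. -/
def Pres (d : ℕ) (g : (ℕ → ZMod d) → ℕ → ZMod d) : Prop :=
  ∀ (n : ℕ) (x y : ℕ → ZMod d), (∀ i < n, x i = y i) → ∀ i < n, g x i = g y i

/-- `Aff_I(X*)`: the set of translations `x ↦ b + x`, as permutations of the boundary. -/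
def AffISet (d : ℕ) : Set (Equiv.Perm (ℕ → ZMod d)) :=
  {e | ∃ b : ℕ → ZMod d, ∀ x, e x = fun i => b i + x i}

lemma affMap_add (d : ℕ) (A : ℕ → ℕ → ZMod d) (b u v : ℕ → ZMod d) (j : ℕ) :
    affMap d A b (u + v) j = affMap d A b v j + ∑ i ∈ Finset.range (j + 1), u i * A i j := by
  simp only [affMap, Pi.add_apply, add_mul, Finset.sum_add_distrib]
  ring

/-- The standard basis vector `δ_i` in `ℤ_d^∞`. -/
def std (d : ℕ) (i : ℕ) : ℕ → ZMod d := fun k => if k = i then 1 else 0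

/-- The normalizer of `Aff_I(X*)` in `Aut(X*)` is the group `Aff(X*)` of all affine
automorphisms: an automorphism `g` of the rooted `d`-regular tree satisfies
`g⁻¹ Aff_I(X*) g = Aff_I(X*)` if and only if `g = π_{A,b}` for some `A ∈ U_∞ℤ_d` and
`b ∈ ℤ_d^∞`. -/
theorem stmt_13 (d : ℕ) (hd : 2 ≤ d) (g : Equiv.Perm (ℕ → ZMod d))
    (hg : Pres d g) (hg' : Pres d g.symm) :
    (fun f => g⁻¹ * f * g) '' AffISet d = AffISet d ↔
      ∃ A b, IsUT d A ∧ ∀ x, g x = affMap d A b x := by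
  haveI : NeZero d := ⟨by omega⟩
  classical
  constructor
  · intro h
    -- key additivity property
    have key : ∀ e x : ℕ → ZMod d, ∀ i, g (e + x) i = (g e i - g 0 i) + g x i := by
      intro e x i
      have he : Equiv.addLeft e ∈ AffISet d := ⟨e, fun x => by funext i; simp⟩
      rw [← h] at he
      obtain ⟨f, ⟨c, hc⟩, hf⟩ := he
      have h1 : ∀ z : ℕ → ZMod d, g (e + z) = fun i => c i + g z i := by
        intro z
        have h2 : g.symm (f (g z)) = e + z := by
          have h3 := congrArg (fun (p : Equiv.Perm (ℕ → ZMod d)) => p z) hf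
          simpa [Equiv.Perm.mul_apply] using h3
        rw [Equiv.symm_apply_eq] at h2
        rw [← h2, hc]
      have hx := congrFun (h1 x) i
      have h0 := congrFun (h1 0) i
      rw [add_zero] at h0
      rw [hx, h0]
      ring
    set B : (ℕ → ZMod d) → ℕ → ZMod d := fun x => g x - g 0 with hBdef
    have hBapp : ∀ x i, B x i = g x i - g 0 i := fun x i => rfl
    have Badd : ∀ x y, B (x + y) = B x + B y := by
      intro x y
      funext i
      simp only [hBdef, Pi.sub_apply, Pi.add_apply]
      rw [key x y i]
      ring
    let φ : (ℕ → ZMod d) →+ (ℕ → ZMod d) := AddMonoidHom.mk' B Badd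
    have hφ : ∀ x, φ x = B x := fun x => rfl
    have hsmul : ∀ (t : ZMod d) (v : ℕ → ZMod d), B (t • v) = t • B v := by
      intro t v
      have h1 : t • v = t.val • v := by
        funext k
        simp [ZMod.natCast_val]
      calc B (t • v) = φ (t.val • v) := by rw [← h1]; rfl
        _ = t.val • φ v := map_nsmul φ t.val v
        _ = t • B v := by
            funext k
            simp [hφ, ZMod.natCast_val]
    refine ⟨fun i j => B (std d i) j, g 0, ⟨?_, ?_⟩, ?_⟩
    · -- upper triangular
      intro i j hji
      have h1 : ∀ k < i, std d i k = (0 : ℕ → ZMod d) k := by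
        intro k hk
        simp [std, Nat.ne_of_lt hk]
      have h2 := hg i (std d i) 0 h1 j hji
      show B (std d i) j = 0
      rw [hBapp, h2, sub_self]
    · -- unit diagonal
      intro i
      have inj : Function.Injective (fun t : ZMod d => t * B (std d i) i) := by
        intro t s hts
        simp only at hts
        have hlow : ∀ t' : ZMod d, ∀ m < i,
            (t' • std d i) m = (0 : ℕ → ZMod d) m := by
          intro t' m hm
          simp [std, Nat.ne_of_lt hm]
        have hdiag : ∀ t' : ZMod d, g (t' • std d i) i
            = g 0 i + t' * B (std d i) i := by
          intro t'
          have h3 := congrFun (hsmul t' (std d i)) i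
          rw [hBapp] at h3
          have h4 : (t' • B (std d i)) i = t' * B (std d i) i := by simp
          rw [h4] at h3
          linear_combination h3
        have himg : ∀ k < i + 1, g (t • std d i) k = g (s • std d i) k := by
          intro k hk
          rcases Nat.lt_succ_iff_lt_or_eq.mp hk with hk' | rfl
          · have ha := hg i (t • std d i) 0 (hlow t) k hk'
            have hb := hg i (s • std d i) 0 (hlow s) k hk'
            rw [ha, hb]
          · rw [hdiag t, hdiag s, hts]
        have h8 := hg' (i + 1) (g (t • std d i)) (g (s • std d i))
          himg i (Nat.lt_succ_self i)
        simpa [std] using h8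
      obtain ⟨t, ht⟩ := Finite.injective_iff_surjective.mp inj 1
      exact IsUnit.of_mul_eq_one (a := B (std d i) i) t (by rw [mul_comm]; exact ht)
    · -- the affine formula
      intro x
      funext j
      set y : ℕ → ZMod d := ∑ i ∈ Finset.range (j + 1), x i • std d i with hy
      have hxy : ∀ k < j + 1, x k = y k := by
        intro k hk
        simp [hy, Finset.sum_apply, std, mul_ite, Finset.sum_ite_eq, Finset.mem_range, hk]
      have h1 := hg (j + 1) x y hxy j (Nat.lt_succ_self j)
      have h2 : B y j = ∑ i ∈ Finset.range (j + 1), x i * B (std d i) j := by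
        have h3 : φ y = ∑ i ∈ Finset.range (j + 1), x i • φ (std d i) := by
          rw [hy, map_sum]
          refine Finset.sum_congr rfl fun i _ => ?_
          show B (x i • std d i) = x i • B (std d i)
          exact hsmul _ _
        have h4 := congrFun h3 j
        simpa [hφ, Finset.sum_apply] using h4
      show g x j = affMap d (fun i j => B (std d i) j) (g 0) x j
      simp only [affMap]
      rw [h1, ← h2, hBapp]
      ring
  · rintro ⟨A, b, hA, hgA⟩
    have h0 : ∀ j, g 0 j = b j := by
      intro j
      rw [hgA 0]
      simp [affMap]
    apply Set.Subset.antisymm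
    · rintro f ⟨p, ⟨c, hc⟩, rfl⟩
      set e : ℕ → ZMod d := g.symm (fun i => c i + g 0 i) with he
      have hge : g e = fun i => c i + g 0 i := g.apply_symm_apply _
      have hsum : ∀ j, ∑ i ∈ Finset.range (j + 1), e i * A i j = c j := by
        intro j
        have h1 := congrFun hge j
        rw [hgA e] at h1
        simp only [affMap] at h1
        rw [h0 j] at h1
        linear_combination h1
      refine ⟨e, fun x => ?_⟩
      show g.symm (p (g x)) = fun i => e i + x i
      rw [hc (g x), Equiv.symm_apply_eq]
      funext j
      show c j + g x j = g (fun i => e i + x i) j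
      have h3 : (fun i => e i + x i) = e + x := rfl
      rw [h3, hgA (e + x), affMap_add d A b e x j, hsum j, hgA x]
      ring
    · rintro f ⟨eb, hf⟩
      set cf : ℕ → ZMod d := fun j => ∑ i ∈ Finset.range (j + 1), eb i * A i j with hcf
      refine ⟨Equiv.addLeft cf, ⟨cf, fun x => by funext i; simp⟩, ?_⟩
      apply Equiv.ext
      intro x
      show g.symm (Equiv.addLeft _ (g x)) = f x
      rw [hf x, Equiv.symm_apply_eq]
      funext j
      show (∑ i ∈ Finset.range (j + 1), eb i * A i j) + g x j = g (fun i => eb i + x i) j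
      have h3 : (fun i => eb i + x i) = eb + x := rfl
      rw [h3, hgA (eb + x), affMap_add d A b eb x j, hgA x]
      ring
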